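/- Let A, B, r, θ ∈ ℝ with r ≠ 0, and let U ⊆ ℝ² be an open set on which A·exp(r·(cos θ·x + sin θ·y)) + B > 0. Define λ(x,y) = (1/2)·log(A·exp(r·(cos θ·x + sin θ·y)) + B) and f(x,y) = r·(cos θ·x + sin θ·y) on U. Then D₁(λ,f) = 0 and D₂(λ,f) = 0 on U. -/

import Mathlib

noncomputable def dx (f : ℝ → ℝ → ℝ) : ℝ → ℝ → ℝ := fun x y => deriv (fun t => f t y) x
noncomputable def dy (f : ℝ → ℝ → ℝ) : ℝ → ℝ → ℝ := fun x y => deriv (fun t => f x t) y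

/-- The operator `D₁` from the paper. -/
noncomputable def D1 (l f : ℝ → ℝ → ℝ) : ℝ → ℝ → ℝ := fun x y =>
  (dx l x y + dx f x y) * (2 * dx l x y * dx f x y + dx (dx f) x y)
  + (dy l x y + dy f x y) * (2 * dy l x y * dx f x y + dy (dx f) x y)
  - (6 * (dx l x y)^2 * dx f x y + 2 * dx (dx l) x y * dx f x y
      + 5 * dx l x y * dx (dx f) x y + dx (dx (dx f)) x y)
  - (6 * (dy l x y)^2 * dx f x y + 2 * dy (dy l) x y * dx f x y
      + 5 * dy l x y * dy (dx f) x y + dy (dy (dx f)) x y)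

/-- The operator `D₂` from the paper. -/
noncomputable def D2 (l f : ℝ → ℝ → ℝ) : ℝ → ℝ → ℝ := fun x y =>
  (dx l x y + dx f x y) * (2 * dx l x y * dy f x y + dx (dy f) x y)
  + (dy l x y + dy f x y) * (2 * dy l x y * dy f x y + dy (dy f) x y)
  - (6 * (dx l x y)^2 * dy f x y + 2 * dx (dx l) x y * dy f x y
      + 5 * dx l x y * dx (dy f) x y + dx (dx (dy f)) x y)
  - (6 * (dy l x y)^2 * dy f x y + 2 * dy (dy l) x y * dy f x y
      + 5 * dy l x y * dy (dy f) x y + dy (dy (dy f)) x y)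


private lemma inner_x (r θ y x : ℝ) :
    HasDerivAt (fun t => r * (Real.cos θ * t + Real.sin θ * y)) (r * Real.cos θ) x := by
  simpa using (((hasDerivAt_id x).const_mul (Real.cos θ)).add_const (Real.sin θ * y)).const_mul r

private lemma inner_y (r θ x y : ℝ) :
    HasDerivAt (fun t => r * (Real.cos θ * x + Real.sin θ * t)) (r * Real.sin θ) y := by
  simpa using (((hasDerivAt_id y).const_mul (Real.sin θ)).const_add (Real.cos θ * x)).const_mul r

private lemma lam_hasDerivAt {A B w : ℝ} (h : A * Real.exp w + B ≠ 0) :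
    HasDerivAt (fun w => (1/2 : ℝ) * Real.log (A * Real.exp w + B))
      (A * Real.exp w / (2 * (A * Real.exp w + B))) w := by
  have hE : HasDerivAt (fun w => A * Real.exp w + B) (A * Real.exp w) w :=
    ((Real.hasDerivAt_exp w).const_mul A).add_const B
  have := (hE.log h).const_mul (1/2 : ℝ)
  exact this.congr_deriv (by field_simp)

private lemma Phi_hasDerivAt {A B w : ℝ} (h : A * Real.exp w + B ≠ 0) :
    HasDerivAt (fun w => A * Real.exp w / (2 * (A * Real.exp w + B)))
      (A * Real.exp w * B / (2 * (A * Real.exp w + B)^2)) w := by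
  have hN : HasDerivAt (fun w => A * Real.exp w) (A * Real.exp w) w :=
    (Real.hasDerivAt_exp w).const_mul A
  have hD : HasDerivAt (fun w => 2 * (A * Real.exp w + B)) (2 * (A * Real.exp w)) w :=
    (((Real.hasDerivAt_exp w).const_mul A).add_const B).const_mul 2
  have hD0 : 2 * (A * Real.exp w + B) ≠ 0 := mul_ne_zero two_ne_zero h
  have := hN.div hD hD0
  exact this.congr_deriv (by field_simp; ring)

set_option maxHeartbeats 1000000

theorem stmt9 (A B r θ : ℝ) (hr : r ≠ 0) (U : Set (ℝ × ℝ)) (hU : IsOpen U)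
    (hpos : ∀ p ∈ U, A * Real.exp (r * (Real.cos θ * p.1 + Real.sin θ * p.2)) + B > 0) :
    ∀ p ∈ U,
      D1 (fun x y => (1/2) * Real.log (A * Real.exp (r * (Real.cos θ * x + Real.sin θ * y)) + B))
         (fun x y => r * (Real.cos θ * x + Real.sin θ * y)) p.1 p.2 = 0 ∧
      D2 (fun x y => (1/2) * Real.log (A * Real.exp (r * (Real.cos θ * x + Real.sin θ * y)) + B))
         (fun x y => r * (Real.cos θ * x + Real.sin θ * y)) p.1 p.2 = 0 := by
  set l : ℝ → ℝ → ℝ :=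
    fun x y => (1/2) * Real.log (A * Real.exp (r * (Real.cos θ * x + Real.sin θ * y)) + B) with hl
  set f : ℝ → ℝ → ℝ := fun x y => r * (Real.cos θ * x + Real.sin θ * y) with hf
  have hne : ∀ a b : ℝ, (a, b) ∈ U →
      A * Real.exp (r * (Real.cos θ * a + Real.sin θ * b)) + B ≠ 0 :=
    fun a b h => ne_of_gt (hpos (a, b) h)
  -- derivatives of f
  have hdxf : dx f = fun _ _ => r * Real.cos θ := by
    funext a b; exact (inner_x r θ b a).deriv
  have hdyf : dy f = fun _ _ => r * Real.sin θ := by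
    funext a b; exact (inner_y r θ a b).deriv
  have hcx : ∀ k : ℝ, dx (fun _ _ => k) = fun _ _ => (0:ℝ) := by
    intro k; funext a b; simp [dx]
  have hcy : ∀ k : ℝ, dy (fun _ _ => k) = fun _ _ => (0:ℝ) := by
    intro k; funext a b; simp [dy]
  -- first derivatives of l
  have hdxl : ∀ a b : ℝ, (a, b) ∈ U → dx l a b =
      A * Real.exp (r * (Real.cos θ * a + Real.sin θ * b)) /
        (2 * (A * Real.exp (r * (Real.cos θ * a + Real.sin θ * b)) + B)) * (r * Real.cos θ) := by
    intro a b hab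
    exact ((lam_hasDerivAt (hne a b hab)).comp a (inner_x r θ b a)).deriv
  have hdyl : ∀ a b : ℝ, (a, b) ∈ U → dy l a b =
      A * Real.exp (r * (Real.cos θ * a + Real.sin θ * b)) /
        (2 * (A * Real.exp (r * (Real.cos θ * a + Real.sin θ * b)) + B)) * (r * Real.sin θ) := by
    intro a b hab
    exact ((lam_hasDerivAt (hne a b hab)).comp b (inner_y r θ a b)).deriv
  rintro ⟨x, y⟩ hp
  have hW := hne x y hp
  -- second derivatives of l at (x,y)
  have hdxxl : dx (dx l) x y =
      A * Real.exp (r * (Real.cos θ * x + Real.sin θ * y)) * B /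
        (2 * (A * Real.exp (r * (Real.cos θ * x + Real.sin θ * y)) + B)^2)
        * (r * Real.cos θ) * (r * Real.cos θ) := by
    have hopen : IsOpen {t : ℝ | (t, y) ∈ U} := hU.preimage (continuous_id.prodMk continuous_const)
    have hev : ∀ᶠ t in nhds x, (t, y) ∈ U := hopen.mem_nhds hp
    have heq : (fun t => dx l t y) =ᶠ[nhds x]
        (fun t => A * Real.exp (r * (Real.cos θ * t + Real.sin θ * y)) /
          (2 * (A * Real.exp (r * (Real.cos θ * t + Real.sin θ * y)) + B)) * (r * Real.cos θ)) :=
      hev.mono fun t ht => hdxl t y ht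
    have : dx (dx l) x y = deriv (fun t =>
        A * Real.exp (r * (Real.cos θ * t + Real.sin θ * y)) /
          (2 * (A * Real.exp (r * (Real.cos θ * t + Real.sin θ * y)) + B)) * (r * Real.cos θ)) x :=
      heq.deriv_eq
    rw [this]
    exact (((Phi_hasDerivAt hW).comp x (inner_x r θ y x)).mul_const (r * Real.cos θ)).deriv
  have hdyyl : dy (dy l) x y =
      A * Real.exp (r * (Real.cos θ * x + Real.sin θ * y)) * B /
        (2 * (A * Real.exp (r * (Real.cos θ * x + Real.sin θ * y)) + B)^2)
        * (r * Real.sin θ) * (r * Real.sin θ) := by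
    have hopen : IsOpen {t : ℝ | (x, t) ∈ U} := hU.preimage (continuous_const.prodMk continuous_id)
    have hev : ∀ᶠ t in nhds y, (x, t) ∈ U := hopen.mem_nhds hp
    have heq : (fun t => dy l x t) =ᶠ[nhds y]
        (fun t => A * Real.exp (r * (Real.cos θ * x + Real.sin θ * t)) /
          (2 * (A * Real.exp (r * (Real.cos θ * x + Real.sin θ * t)) + B)) * (r * Real.sin θ)) :=
      hev.mono fun t ht => hdyl x t ht
    have : dy (dy l) x y = deriv (fun t =>
        A * Real.exp (r * (Real.cos θ * x + Real.sin θ * t)) /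
          (2 * (A * Real.exp (r * (Real.cos θ * x + Real.sin θ * t)) + B)) * (r * Real.sin θ)) y :=
      heq.deriv_eq
    rw [this]
    exact (((Phi_hasDerivAt hW).comp y (inner_y r θ x y)).mul_const (r * Real.sin θ)).deriv
  have h1 := hdxl x y hp
  have h2 := hdyl x y hp
  constructor
  · simp only [D1]
    rw [hdxf, hdyf, hcx (r * Real.cos θ), hcy (r * Real.cos θ), hcx 0, hcy 0,
      h1, h2, hdxxl, hdyyl]
    beta_reduce
    field_simp [hW]
    ring
  · simp only [D2]
    rw [hdxf, hdyf, hcx (r * Real.sin θ), hcy (r * Real.sin θ), hcx 0, hcy 0,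
      h1, h2, hdxxl, hdyyl]
    beta_reduce
    field_simp [hW]
    ring
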